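/- For positive integers i, a, b, c (with convergence, e.g. all ≥ 2), the three 'cut-point' sums recombine: ζ_{sl(4)}(a,b,0,c,0,i) + ζ_{sl(4)}(i,0,b,a,0,c) + ζ_{sl(4)}(0,0,a,b,i,c) = ζ(i)·ζ_{sl(3)}(a,b,c) − ζ_{sl(3)}(a+i,b,c) − ζ_{sl(3)}(a,b,c+i). -/

import Mathlib

open ENNReal

lemma e3_toReal (f : ℕ → ℕ → ℕ → ℝ) (hnn : ∀ x y z, 0 ≤ f x y z)
    (hfin : (∑' p : ℕ × ℕ × ℕ, ENNReal.ofReal (f p.1 p.2.1 p.2.2)) ≠ ⊤) :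
    (∑' p : ℕ × ℕ × ℕ, ENNReal.ofReal (f p.1 p.2.1 p.2.2)).toReal
      = ∑' (x : ℕ) (y : ℕ) (z : ℕ), f x y z := by
  have h1 : (∑' p : ℕ × ℕ × ℕ, ENNReal.ofReal (f p.1 p.2.1 p.2.2))
      = ∑' (x : ℕ) (y : ℕ) (z : ℕ), ENNReal.ofReal (f x y z) := by
    rw [ENNReal.tsum_prod (f := fun x (q : ℕ × ℕ) => ENNReal.ofReal (f x q.1 q.2))]
    exact tsum_congr fun x => ENNReal.tsum_prod (f := fun y z => ENNReal.ofReal (f x y z))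
  rw [h1] at hfin ⊢
  have hx : ∀ x, (∑' (y : ℕ) (z : ℕ), ENNReal.ofReal (f x y z)) ≠ ⊤ :=
    fun x => ne_top_of_le_ne_top hfin (ENNReal.le_tsum x)
  have hxy : ∀ x y, (∑' (z : ℕ), ENNReal.ofReal (f x y z)) ≠ ⊤ :=
    fun x y => ne_top_of_le_ne_top (hx x) (ENNReal.le_tsum y)
  rw [ENNReal.tsum_toReal_eq hx]
  refine tsum_congr fun x => ?_
  rw [ENNReal.tsum_toReal_eq (hxy x)]
  refine tsum_congr fun y => ?_
  rw [ENNReal.tsum_toReal_eq (fun z => ENNReal.ofReal_ne_top)]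
  exact tsum_congr fun z => ENNReal.toReal_ofReal (hnn x y z)

lemma e2_toReal (f : ℕ → ℕ → ℝ) (hnn : ∀ x y, 0 ≤ f x y)
    (hfin : (∑' p : ℕ × ℕ, ENNReal.ofReal (f p.1 p.2)) ≠ ⊤) :
    (∑' p : ℕ × ℕ, ENNReal.ofReal (f p.1 p.2)).toReal = ∑' (x : ℕ) (y : ℕ), f x y := by
  have h1 : (∑' p : ℕ × ℕ, ENNReal.ofReal (f p.1 p.2))
      = ∑' (x : ℕ) (y : ℕ), ENNReal.ofReal (f x y) :=
    ENNReal.tsum_prod (f := fun x y => ENNReal.ofReal (f x y))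
  rw [h1] at hfin ⊢
  have hx : ∀ x, (∑' (y : ℕ), ENNReal.ofReal (f x y)) ≠ ⊤ :=
    fun x => ne_top_of_le_ne_top hfin (ENNReal.le_tsum x)
  rw [ENNReal.tsum_toReal_eq hx]
  refine tsum_congr fun x => ?_
  rw [ENNReal.tsum_toReal_eq (fun y => ENNReal.ofReal_ne_top)]
  exact tsum_congr fun y => ENNReal.toReal_ofReal (hnn x y)

lemma e1_toReal (f : ℕ → ℝ) (hnn : ∀ x, 0 ≤ f x) :
    (∑' n : ℕ, ENNReal.ofReal (f n)).toReal = ∑' n : ℕ, f n := by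
  rw [ENNReal.tsum_toReal_eq (fun n => ENNReal.ofReal_ne_top)]
  exact tsum_congr fun n => ENNReal.toReal_ofReal (hnn n)

lemma zeta_fin {s : ℕ} (hs : 2 ≤ s) :
    (∑' n : ℕ, ENNReal.ofReal (1 / ((n : ℝ) + 1) ^ s)) ≠ ⊤ := by
  have hsum : Summable (fun n : ℕ => 1 / ((n : ℝ) + 1) ^ s) := by
    have h1 : Summable (fun n : ℕ => 1 / (n : ℝ) ^ s) :=
      Real.summable_one_div_nat_pow.mpr (by omega)
    have h2 := (summable_nat_add_iff 1).mpr h1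
    simpa using h2
  rw [← ENNReal.ofReal_tsum_of_nonneg (fun n => by positivity) hsum]
  exact ENNReal.ofReal_ne_top

lemma sl3_fin {a b c : ℕ} (ha : 2 ≤ a) (hb : 2 ≤ b) :
    (∑' p : ℕ × ℕ, ENNReal.ofReal
      (1 / (((p.1 : ℝ) + 1) ^ a * ((p.2 : ℝ) + 1) ^ b * ((p.1 : ℝ) + (p.2 : ℝ) + 2) ^ c))) ≠ ⊤ := by
  have hle : ∀ p : ℕ × ℕ, ENNReal.ofReal
      (1 / (((p.1 : ℝ) + 1) ^ a * ((p.2 : ℝ) + 1) ^ b * ((p.1 : ℝ) + (p.2 : ℝ) + 2) ^ c))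
      ≤ ENNReal.ofReal (1 / ((p.1 : ℝ) + 1) ^ a) * ENNReal.ofReal (1 / ((p.2 : ℝ) + 1) ^ b) := by
    rintro ⟨m, n⟩
    rw [← ENNReal.ofReal_mul (by positivity)]
    apply ENNReal.ofReal_le_ofReal
    rw [div_mul_div_comm, one_mul]
    apply one_div_le_one_div_of_le (by positivity)
    refine le_mul_of_one_le_right (by positivity) (one_le_pow₀ ?_)
    have h1 : (0:ℝ) ≤ (m:ℝ) := Nat.cast_nonneg _
    have h2 : (0:ℝ) ≤ (n:ℝ) := Nat.cast_nonneg _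
    linarith
  have h2 : (∑' p : ℕ × ℕ, ENNReal.ofReal (1 / ((p.1 : ℝ) + 1) ^ a) *
        ENNReal.ofReal (1 / ((p.2 : ℝ) + 1) ^ b))
      = (∑' m : ℕ, ENNReal.ofReal (1 / ((m : ℝ) + 1) ^ a)) *
        (∑' n : ℕ, ENNReal.ofReal (1 / ((n : ℝ) + 1) ^ b)) := by
    rw [ENNReal.tsum_prod (f := fun (m n : ℕ) =>
      ENNReal.ofReal (1 / ((m : ℝ) + 1) ^ a) * ENNReal.ofReal (1 / ((n : ℝ) + 1) ^ b))]
    simp_rw [ENNReal.tsum_mul_left, ENNReal.tsum_mul_right]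
  exact ne_top_of_le_ne_top (h2 ▸ ENNReal.mul_ne_top (zeta_fin ha) (zeta_fin hb))
    (ENNReal.tsum_le_tsum hle)

lemma piece_eq {α : Type*} (F : ℕ × ℕ × ℕ → ℝ≥0∞) (cond : ℕ × ℕ × ℕ → Prop)
    [DecidablePred cond] (g : α → ℕ × ℕ × ℕ) (hinj : Function.Injective g) (hg : ∀ x, cond (g x))
    (hcov : ∀ p, cond p → p ∈ Set.range g) :
    ∑' p, (if cond p then F p else 0) = ∑' x, F (g x) := by
  rw [← hinj.tsum_eq (f := fun p => if cond p then F p else 0)]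
  · exact tsum_congr fun x => if_pos (hg x)
  · intro p hp
    apply hcov
    by_contra h
    simp only [Function.mem_support, if_neg h, ne_eq, not_true_eq_false] at hp
noncomputable def wittenSl4 (a b c d e f : ℕ) : ℝ :=
  ∑' (n₁ : ℕ) (n₂ : ℕ) (n₃ : ℕ),
    1 / ((n₁ + 1 : ℝ) ^ a * (n₂ + 1 : ℝ) ^ b * (n₃ + 1 : ℝ) ^ c *
      (n₁ + n₂ + 2 : ℝ) ^ d * (n₂ + n₃ + 2 : ℝ) ^ e * (n₁ + n₂ + n₃ + 3 : ℝ) ^ f)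

noncomputable def wittenSl3 (a b c : ℕ) : ℝ :=
  ∑' (m : ℕ) (n : ℕ), 1 / ((m + 1 : ℝ) ^ a * (n + 1 : ℝ) ^ b * (m + n + 2 : ℝ) ^ c)

noncomputable def rzeta (s : ℕ) : ℝ := ∑' (n : ℕ), 1 / ((n + 1 : ℝ) ^ s)

theorem cut_point_recombination (i a b c : ℕ)
    (hi : 2 ≤ i) (ha : 2 ≤ a) (hb : 2 ≤ b) (hc : 2 ≤ c) :
    wittenSl4 a b 0 c 0 i + wittenSl4 i 0 b a 0 c + wittenSl4 0 0 a b i c =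
      rzeta i * wittenSl3 a b c - wittenSl3 (a + i) b c - wittenSl3 a b (c + i) := by
  -- master term over (v, m, n)
  set F : ℕ × ℕ × ℕ → ℝ≥0∞ := fun p => ENNReal.ofReal
      (1 / (((p.1 : ℝ) + 1) ^ i * ((p.2.1 : ℝ) + 1) ^ a * ((p.2.2 : ℝ) + 1) ^ b *
        ((p.2.1 : ℝ) + (p.2.2 : ℝ) + 2) ^ c)) with hFdef
  set Z : ℝ≥0∞ := ∑' n : ℕ, ENNReal.ofReal (1 / ((n : ℝ) + 1) ^ i) with hZdef
  set W : ℝ≥0∞ := ∑' p : ℕ × ℕ, ENNReal.ofReal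
      (1 / (((p.1 : ℝ) + 1) ^ a * ((p.2 : ℝ) + 1) ^ b * ((p.1 : ℝ) + (p.2 : ℝ) + 2) ^ c))
      with hWdef
  set SB : ℝ≥0∞ := ∑' q : ℕ × ℕ × ℕ, ENNReal.ofReal
      (1 / (((q.1 : ℝ) + 1) ^ i * ((q.2.1 : ℝ) + 1) ^ 0 * ((q.2.2 : ℝ) + 1) ^ b *
        ((q.1 : ℝ) + (q.2.1 : ℝ) + 2) ^ a * ((q.2.1 : ℝ) + (q.2.2 : ℝ) + 2) ^ 0 *
        ((q.1 : ℝ) + (q.2.1 : ℝ) + (q.2.2 : ℝ) + 3) ^ c)) with hSB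
  set SX : ℝ≥0∞ := ∑' q : ℕ × ℕ, ENNReal.ofReal
      (1 / (((q.1 : ℝ) + 1) ^ (a + i) * ((q.2 : ℝ) + 1) ^ b *
        ((q.1 : ℝ) + (q.2 : ℝ) + 2) ^ c)) with hSX
  set SC : ℝ≥0∞ := ∑' q : ℕ × ℕ × ℕ, ENNReal.ofReal
      (1 / (((q.1 : ℝ) + 1) ^ 0 * ((q.2.1 : ℝ) + 1) ^ 0 * ((q.2.2 : ℝ) + 1) ^ a *
        ((q.1 : ℝ) + (q.2.1 : ℝ) + 2) ^ b * ((q.2.1 : ℝ) + (q.2.2 : ℝ) + 2) ^ i *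
        ((q.1 : ℝ) + (q.2.1 : ℝ) + (q.2.2 : ℝ) + 3) ^ c)) with hSC
  set SY : ℝ≥0∞ := ∑' q : ℕ × ℕ, ENNReal.ofReal
      (1 / (((q.1 : ℝ) + 1) ^ a * ((q.2 : ℝ) + 1) ^ b *
        ((q.1 : ℝ) + (q.2 : ℝ) + 2) ^ (c + i))) with hSY
  set SA : ℝ≥0∞ := ∑' q : ℕ × ℕ × ℕ, ENNReal.ofReal
      (1 / (((q.1 : ℝ) + 1) ^ a * ((q.2.1 : ℝ) + 1) ^ b * ((q.2.2 : ℝ) + 1) ^ 0 *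
        ((q.1 : ℝ) + (q.2.1 : ℝ) + 2) ^ c * ((q.2.1 : ℝ) + (q.2.2 : ℝ) + 2) ^ 0 *
        ((q.1 : ℝ) + (q.2.1 : ℝ) + (q.2.2 : ℝ) + 3) ^ i)) with hSA
  -- product formula
  have hprod : ∑' p : ℕ × ℕ × ℕ, F p = Z * W := by
    have hpt : ∀ p : ℕ × ℕ × ℕ, F p = ENNReal.ofReal (1 / ((p.1 : ℝ) + 1) ^ i) *
        ENNReal.ofReal (1 / (((p.2.1 : ℝ) + 1) ^ a * ((p.2.2 : ℝ) + 1) ^ b *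
          ((p.2.1 : ℝ) + (p.2.2 : ℝ) + 2) ^ c)) := by
      intro p
      rw [hFdef, ← ENNReal.ofReal_mul (by positivity)]
      congr 1
      rw [div_mul_div_comm, one_mul]
      congr 1
      ring
    calc ∑' p : ℕ × ℕ × ℕ, F p
        = ∑' p : ℕ × ℕ × ℕ, ENNReal.ofReal (1 / ((p.1 : ℝ) + 1) ^ i) *
            ENNReal.ofReal (1 / (((p.2.1 : ℝ) + 1) ^ a * ((p.2.2 : ℝ) + 1) ^ b *
              ((p.2.1 : ℝ) + (p.2.2 : ℝ) + 2) ^ c)) := tsum_congr hpt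
      _ = ∑' (v : ℕ), ∑' (q : ℕ × ℕ), ENNReal.ofReal (1 / ((v : ℝ) + 1) ^ i) *
            ENNReal.ofReal (1 / (((q.1 : ℝ) + 1) ^ a * ((q.2 : ℝ) + 1) ^ b *
              ((q.1 : ℝ) + (q.2 : ℝ) + 2) ^ c)) :=
          ENNReal.tsum_prod (f := fun (v : ℕ) (q : ℕ × ℕ) =>
            ENNReal.ofReal (1 / ((v : ℝ) + 1) ^ i) *
            ENNReal.ofReal (1 / (((q.1 : ℝ) + 1) ^ a * ((q.2 : ℝ) + 1) ^ b *
              ((q.1 : ℝ) + (q.2 : ℝ) + 2) ^ c)))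
      _ = Z * W := by simp_rw [ENNReal.tsum_mul_left, ENNReal.tsum_mul_right]; rfl
  have hfin : ∑' p : ℕ × ℕ × ℕ, F p ≠ ⊤ := by
    rw [hprod]
    exact ENNReal.mul_ne_top (zeta_fin hi) (sl3_fin ha hb)
  have hsplit : ∑' p : ℕ × ℕ × ℕ, F p =
      (∑' p : ℕ × ℕ × ℕ, if p.1 < p.2.1 then F p else 0) +
      ((∑' p : ℕ × ℕ × ℕ, if p.1 = p.2.1 then F p else 0) +
      ((∑' p : ℕ × ℕ × ℕ, if p.2.1 < p.1 ∧ p.1 < p.2.1 + p.2.2 + 1 then F p else 0) +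
      ((∑' p : ℕ × ℕ × ℕ, if p.1 = p.2.1 + p.2.2 + 1 then F p else 0) +
      (∑' p : ℕ × ℕ × ℕ, if p.2.1 + p.2.2 + 1 < p.1 then F p else 0)))) := by
    rw [← ENNReal.tsum_add, ← ENNReal.tsum_add, ← ENNReal.tsum_add, ← ENNReal.tsum_add]
    refine tsum_congr fun p => ?_
    obtain ⟨v, m, n⟩ := p
    split_ifs <;> first | (exfalso; omega) | simp
  have hple : ∀ (cnd : ℕ × ℕ × ℕ → Prop) (_ : DecidablePred cnd),
      (∑' p : ℕ × ℕ × ℕ, if cnd p then F p else 0) ≠ ⊤ := by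
    intro cnd _
    refine ne_top_of_le_ne_top hfin (ENNReal.tsum_le_tsum fun p => ?_)
    split_ifs <;> simp
  -- piece 1 : v < m  ~  wittenSl4 i 0 b a 0 c
  have h1 : (∑' p : ℕ × ℕ × ℕ, if p.1 < p.2.1 then F p else 0) = SB := by
    rw [hSB]
    refine (piece_eq F (fun p => p.1 < p.2.1)
        (fun q : ℕ × ℕ × ℕ => (q.1, q.1 + q.2.1 + 1, q.2.2)) ?_ ?_ ?_).trans
      (tsum_congr fun q => ?_)
    · rintro ⟨x, y, z⟩ ⟨x', y', z'⟩ h; simp only [Prod.mk.injEq] at h ⊢; omega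
    · rintro ⟨x, y, z⟩; dsimp only; omega
    · rintro ⟨v, m, n⟩ hcond; dsimp only at hcond
      exact ⟨(v, m - v - 1, n), by simp only [Prod.mk.injEq, true_and, and_true]; omega⟩
    · simp only [hFdef]
      congr 1
      push_cast
      ring
  -- piece 2 : v = m  ~  wittenSl3 (a+i) b c
  have h2 : (∑' p : ℕ × ℕ × ℕ, if p.1 = p.2.1 then F p else 0) = SX := by
    rw [hSX]
    refine (piece_eq F (fun p => p.1 = p.2.1)
        (fun q : ℕ × ℕ => (q.1, q.1, q.2)) ?_ ?_ ?_).trans (tsum_congr fun q => ?_)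
    · rintro ⟨x, y⟩ ⟨x', y'⟩ h; simp only [Prod.mk.injEq] at h ⊢; omega
    · rintro ⟨x, y⟩; dsimp only
    · rintro ⟨v, m, n⟩ hcond; dsimp only at hcond
      exact ⟨(m, n), by simp only [Prod.mk.injEq, true_and, and_true]; omega⟩
    · simp only [hFdef]
      congr 1
      push_cast
      ring
  -- piece 3 : m < v < m+n+1  ~  wittenSl4 0 0 a b i c
  have h3 : (∑' p : ℕ × ℕ × ℕ,
      if p.2.1 < p.1 ∧ p.1 < p.2.1 + p.2.2 + 1 then F p else 0) = SC := by
    rw [hSC]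
    refine (piece_eq F (fun p => p.2.1 < p.1 ∧ p.1 < p.2.1 + p.2.2 + 1)
        (fun q : ℕ × ℕ × ℕ => (q.2.2 + q.2.1 + 1, q.2.2, q.2.1 + q.1 + 1)) ?_ ?_ ?_).trans
      (tsum_congr fun q => ?_)
    · rintro ⟨x, y, z⟩ ⟨x', y', z'⟩ h; simp only [Prod.mk.injEq] at h ⊢; omega
    · rintro ⟨x, y, z⟩; dsimp only; omega
    · rintro ⟨v, m, n⟩ hcond; dsimp only at hcond
      exact ⟨(n - (v - m), v - m - 1, m), by simp only [Prod.mk.injEq, true_and, and_true]; omega⟩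
    · simp only [hFdef]
      congr 1
      push_cast
      ring
  -- piece 4 : v = m+n+1  ~  wittenSl3 a b (c+i)
  have h4 : (∑' p : ℕ × ℕ × ℕ, if p.1 = p.2.1 + p.2.2 + 1 then F p else 0) = SY := by
    rw [hSY]
    refine (piece_eq F (fun p => p.1 = p.2.1 + p.2.2 + 1)
        (fun q : ℕ × ℕ => (q.1 + q.2 + 1, q.1, q.2)) ?_ ?_ ?_).trans (tsum_congr fun q => ?_)
    · rintro ⟨x, y⟩ ⟨x', y'⟩ h; simp only [Prod.mk.injEq] at h ⊢; omega
    · rintro ⟨x, y⟩; dsimp only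
    · rintro ⟨v, m, n⟩ hcond; dsimp only at hcond
      exact ⟨(m, n), by simp only [Prod.mk.injEq, true_and, and_true]; omega⟩
    · simp only [hFdef]
      congr 1
      push_cast
      ring
  -- piece 5 : v > m+n+1  ~  wittenSl4 a b 0 c 0 i
  have h5 : (∑' p : ℕ × ℕ × ℕ, if p.2.1 + p.2.2 + 1 < p.1 then F p else 0) = SA := by
    rw [hSA]
    refine (piece_eq F (fun p => p.2.1 + p.2.2 + 1 < p.1)
        (fun q : ℕ × ℕ × ℕ => (q.1 + q.2.1 + q.2.2 + 2, q.1, q.2.1)) ?_ ?_ ?_).trans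
      (tsum_congr fun q => ?_)
    · rintro ⟨x, y, z⟩ ⟨x', y', z'⟩ h; simp only [Prod.mk.injEq] at h ⊢; omega
    · rintro ⟨x, y, z⟩; dsimp only; omega
    · rintro ⟨v, m, n⟩ hcond; dsimp only at hcond
      exact ⟨(m, n, v - m - n - 2), by simp only [Prod.mk.injEq, true_and, and_true]; omega⟩
    · simp only [hFdef]
      congr 1
      push_cast
      ring
  have finB : SB ≠ ⊤ := h1 ▸ hple _ _
  have finX : SX ≠ ⊤ := h2 ▸ hple _ _
  have finC : SC ≠ ⊤ := h3 ▸ hple _ _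
  have finY : SY ≠ ⊤ := h4 ▸ hple _ _
  have finA : SA ≠ ⊤ := h5 ▸ hple _ _
  have hkey : Z * W = SB + (SX + (SC + (SY + SA))) := by
    rw [← hprod, hsplit, h1, h2, h3, h4, h5]
  -- convert everything to reals
  have eB : wittenSl4 i 0 b a 0 c = SB.toReal := by
    rw [hSB]
    exact (e3_toReal (fun x y z => 1 / ((x + 1 : ℝ) ^ i * (y + 1 : ℝ) ^ 0 * (z + 1 : ℝ) ^ b *
      (x + y + 2 : ℝ) ^ a * (y + z + 2 : ℝ) ^ 0 * (x + y + z + 3 : ℝ) ^ c))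
      (fun x y z => by positivity) (hSB ▸ finB)).symm
  have eX : wittenSl3 (a + i) b c = SX.toReal := by
    rw [hSX]
    exact (e2_toReal (fun x y => 1 / ((x + 1 : ℝ) ^ (a + i) * (y + 1 : ℝ) ^ b *
      (x + y + 2 : ℝ) ^ c)) (fun x y => by positivity) (hSX ▸ finX)).symm
  have eC : wittenSl4 0 0 a b i c = SC.toReal := by
    rw [hSC]
    exact (e3_toReal (fun x y z => 1 / ((x + 1 : ℝ) ^ 0 * (y + 1 : ℝ) ^ 0 * (z + 1 : ℝ) ^ a *
      (x + y + 2 : ℝ) ^ b * (y + z + 2 : ℝ) ^ i * (x + y + z + 3 : ℝ) ^ c))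
      (fun x y z => by positivity) (hSC ▸ finC)).symm
  have eY : wittenSl3 a b (c + i) = SY.toReal := by
    rw [hSY]
    exact (e2_toReal (fun x y => 1 / ((x + 1 : ℝ) ^ a * (y + 1 : ℝ) ^ b *
      (x + y + 2 : ℝ) ^ (c + i))) (fun x y => by positivity) (hSY ▸ finY)).symm
  have eA : wittenSl4 a b 0 c 0 i = SA.toReal := by
    rw [hSA]
    exact (e3_toReal (fun x y z => 1 / ((x + 1 : ℝ) ^ a * (y + 1 : ℝ) ^ b * (z + 1 : ℝ) ^ 0 *
      (x + y + 2 : ℝ) ^ c * (y + z + 2 : ℝ) ^ 0 * (x + y + z + 3 : ℝ) ^ i))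
      (fun x y z => by positivity) (hSA ▸ finA)).symm
  have eZ : rzeta i = Z.toReal := by
    rw [hZdef]
    exact (e1_toReal (fun n => 1 / ((n + 1 : ℝ) ^ i)) (fun n => by positivity)).symm
  have eW : wittenSl3 a b c = W.toReal := by
    rw [hWdef]
    exact (e2_toReal (fun x y => 1 / ((x + 1 : ℝ) ^ a * (y + 1 : ℝ) ^ b * (x + y + 2 : ℝ) ^ c))
      (fun x y => by positivity) (hWdef ▸ sl3_fin ha hb)).symm
  rw [eA, eB, eC, eX, eY, eZ, eW, ← ENNReal.toReal_mul, hkey,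
    ENNReal.toReal_add finB (ENNReal.add_ne_top.mpr ⟨finX, ENNReal.add_ne_top.mpr
      ⟨finC, ENNReal.add_ne_top.mpr ⟨finY, finA⟩⟩⟩),
    ENNReal.toReal_add finX (ENNReal.add_ne_top.mpr ⟨finC, ENNReal.add_ne_top.mpr ⟨finY, finA⟩⟩),
    ENNReal.toReal_add finC (ENNReal.add_ne_top.mpr ⟨finY, finA⟩),
    ENNReal.toReal_add finY finA]
  ring
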